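/- Let (X,d) be a dissimilarity space with a compatible order <, let p ∈ X, and let C be a copoint at p with C ≠ {p}. Then both sets C^r := {u ∈ C : p < u} and C^l := {u ∈ C : u < p} are intervals of the order < (one of them may be empty). -/

import Mathlib

def IsMmodule {X : Type*} (d : X → X → ℝ) (M : Set X) : Prop :=
  ∀ z ∉ M, ∀ x ∈ M, ∀ y ∈ M, d z x = d z y

def IsCopoint {X : Type*} (d : X → X → ℝ) (p : X) (C : Set X) : Prop :=
  IsMmodule d C ∧ p ∉ C ∧
    ∀ M : Set X, IsMmodule d M → p ∉ M → C ⊆ M → M = C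

def IsCompatible {X : Type*} (d : X → X → ℝ) (lt : X → X → Prop) : Prop :=
  ∀ x y z : X, lt x y → lt y z → max (d x y) (d y z) ≤ d x z

/-- `I` is an interval of the order `lt`. -/
def IsInterval {X : Type*} (lt : X → X → Prop) (I : Set X) : Prop :=
  ∀ x ∈ I, ∀ z ∈ I, ∀ y : X, lt x y → lt y z → y ∈ I

/-- Key auxiliary fact: if `x, z ∈ C` for a copoint `C` at `p`, and `p` is not strictly
between `x` and `z`, then every point strictly between `x` and `z` lies in `C`. -/
lemma copoint_between {X : Type*} (d : X → X → ℝ)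
    (hsymm : ∀ x y : X, d x y = d y x)
    (lt : X → X → Prop)
    (htrans : ∀ a b c : X, lt a b → lt b c → lt a c)
    (htri : ∀ a b : X, lt a b ∨ a = b ∨ lt b a)
    (hcomp : IsCompatible d lt)
    (p : X) (C : Set X) (hC : IsCopoint d p C)
    (x z : X) (hx : x ∈ C) (hz : z ∈ C) (hp : ¬ (lt x p ∧ lt p z)) :
    ∀ y : X, lt x y → lt y z → y ∈ C := by
  obtain ⟨hmod, hpC, hmax⟩ := hC
  set M : Set X := C ∪ {u | lt x u ∧ lt u z} with hM
  have hMmod : IsMmodule d M := by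
    intro w hw a ha b hb
    -- w ∉ C and w is not strictly between x and z
    have hwC : w ∉ C := fun h => hw (Or.inl h)
    have hwI : ¬ (lt x w ∧ lt w z) := fun h => hw (Or.inr h)
    have hside : lt w x ∨ lt z w := by
      rcases htri w x with h | h | h
      · exact Or.inl h
      · exact absurd (h ▸ hx) hwC
      · rcases htri w z with h' | h' | h'
        · exact absurd ⟨h, h'⟩ hwI
        · exact absurd (h' ▸ hz) hwC
        · exact Or.inr h'
    have hwz : d w z = d w x := hmod w hwC z hz x hx
    have key : ∀ u ∈ M, d w u = d w x := by
      intro u hu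
      rcases hu with hu | ⟨hxu, huz⟩
      · exact hmod w hwC u hu x hx
      · rcases hside with hwx | hzw
        · have h1 : d w x ≤ d w u :=
            le_trans (le_max_left _ _) (hcomp w x u hwx hxu)
          have h2 : d w u ≤ d w x := by
            have := hcomp w u z (htrans _ _ _ hwx hxu) huz
            calc d w u ≤ d w z := le_trans (le_max_left _ _) this
              _ = d w x := hwz
          exact le_antisymm h2 h1
        · have h1 : d u w ≤ d x w :=
            le_trans (le_max_right _ _) (hcomp x u w hxu (htrans _ _ _ huz hzw))
          have h2 : d z w ≤ d u w :=
            le_trans (le_max_right _ _) (hcomp u z w huz hzw)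
          have : d u w = d x w := le_antisymm h1 (by
            calc d x w = d w x := hsymm x w
              _ = d w z := hwz.symm
              _ = d z w := hsymm w z
              _ ≤ d u w := h2)
          calc d w u = d u w := hsymm w u
            _ = d x w := this
            _ = d w x := hsymm x w
    rw [key a ha, key b hb]
  have hpM : p ∉ M := by
    rintro (h | h)
    · exact hpC h
    · exact hp h
  have hMC : M = C := hmax M hMmod hpM Set.subset_union_left
  intro y hxy hyz
  have : y ∈ M := Or.inr ⟨hxy, hyz⟩
  rwa [hMC] at this

/-- for a compatible order `<` and a copoint `C` at `p` with `C ≠ {p}`,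
both `C^r = {u ∈ C : p < u}` and `C^l = {u ∈ C : u < p}` are intervals of `<`. -/
theorem copoint_two_intervals {X : Type*} [Fintype X] (d : X → X → ℝ)
    (hsymm : ∀ x y : X, d x y = d y x)
    (hnonneg : ∀ x y : X, 0 ≤ d x y)
    (hself : ∀ x : X, d x x = 0)
    (lt : X → X → Prop) (hsto : IsStrictTotalOrder X lt)
    (hcomp : IsCompatible d lt)
    (p : X) (C : Set X) (hC : IsCopoint d p C) (hCne : C ≠ {p}) :
    IsInterval lt {u ∈ C | lt p u} ∧ IsInterval lt {u ∈ C | lt u p} := by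
  have htrans : ∀ a b c : X, lt a b → lt b c → lt a c := fun a b c => hsto.trans a b c
  have htri : ∀ a b : X, lt a b ∨ a = b ∨ lt b a := fun a b => by
    by_cases h1 : lt a b
    · exact Or.inl h1
    by_cases h2 : lt b a
    · exact Or.inr (Or.inr h2)
    exact Or.inr (Or.inl (hsto.trichotomous a b h1 h2))
  have hirr : ∀ a : X, ¬ lt a a := fun a => hsto.irrefl a
  have hasym : ∀ a b : X, lt a b → ¬ lt b a := fun a b h h' => hirr a (htrans _ _ _ h h')
  constructor
  · rintro x ⟨hxC, hpx⟩ z ⟨hzC, hpz⟩ y hxy hyz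
    have hyC : y ∈ C :=
      copoint_between d hsymm lt htrans htri hcomp p C hC x z hxC hzC
        (fun h => hasym p x hpx h.1) y hxy hyz
    exact ⟨hyC, htrans _ _ _ hpx hxy⟩
  · rintro x ⟨hxC, hxp⟩ z ⟨hzC, hzp⟩ y hxy hyz
    have hyC : y ∈ C :=
      copoint_between d hsymm lt htrans htri hcomp p C hC x z hxC hzC
        (fun h => hasym z p hzp h.2) y hxy hyz
    exact ⟨hyC, htrans _ _ _ hyz hzp⟩
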